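/- The expected posterior information gain is bounded by the prior information gain: for every belief b over S, every a ∈ A, with L(o|b) = ∑_s P(o|s)·b(s) and posterior b(·|o)(s) = P(o|s)·b(s)/L(o|b) when L(o|b) > 0, it holds that ∑_{o : L(o|b) > 0} L(o|b)·IG(b(·|o), a) ≤ IG(b, a). -/

import Mathlib

/-- A belief over a finite set: nonnegative and sums to one. -/
def IsBelief {X : Type*} [Fintype X] (p : X → ℝ) : Prop :=
  (∀ x, 0 ≤ p x) ∧ ∑ x, p x = 1

/-- KL divergence between two distributions on a finite set. -/
noncomputable def KL {X : Type*} [Fintype X] (p q : X → ℝ) : ℝ :=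
  ∑ x, if 0 < p x then p x * Real.log (p x / q x) else 0

/-- Predicted (one-step open-loop) belief `b_a(s') = ∑_s P(s'|s,a) b(s)`. -/
noncomputable def predBelief {S A : Type*} [Fintype S]
    (T : S → A → S → ℝ) (b : S → ℝ) (a : A) (s' : S) : ℝ :=
  ∑ s, T s a s' * b s

/-- Observation predictive `P(o'|b,a) = ∑_{s'} P(o'|s') b_a(s')`. -/
noncomputable def obsPred {S O A : Type*} [Fintype S]
    (T : S → A → S → ℝ) (L : S → O → ℝ) (b : S → ℝ) (a : A) (o : O) : ℝ :=
  ∑ s', L s' o * predBelief T b a s'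

/-- Posterior `τ(b,a,o')(s') = P(o'|s') b_a(s') / P(o'|b,a)`. -/
noncomputable def postBelief {S O A : Type*} [Fintype S]
    (T : S → A → S → ℝ) (L : S → O → ℝ) (b : S → ℝ) (a : A) (o : O) (s' : S) : ℝ :=
  L s' o * predBelief T b a s' / obsPred T L b a o

/-- Information gain `IG(b,a)`. -/
noncomputable def IG {S O A : Type*} [Fintype S] [Fintype O]
    (T : S → A → S → ℝ) (L : S → O → ℝ) (b : S → ℝ) (a : A) : ℝ :=
  ∑ o, if 0 < obsPred T L b a o then
    obsPred T L b a o * KL (postBelief T L b a o) (predBelief T b a) else 0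

section Aux

variable {S O A : Type*} [Fintype S] [Fintype O]

lemma predBelief_nonneg (T : S → A → S → ℝ) (hT : ∀ s a s', 0 ≤ T s a s')
    (p : S → ℝ) (hp : ∀ s, 0 ≤ p s) (a : A) (s' : S) : 0 ≤ predBelief T p a s' :=
  Finset.sum_nonneg fun s _ => mul_nonneg (hT s a s') (hp s)

lemma obsPred_nonneg (T : S → A → S → ℝ) (L : S → O → ℝ)
    (hT : ∀ s a s', 0 ≤ T s a s') (hL : ∀ s o, 0 ≤ L s o)
    (p : S → ℝ) (hp : ∀ s, 0 ≤ p s) (a : A) (o : O) : 0 ≤ obsPred T L p a o :=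
  Finset.sum_nonneg fun s' _ =>
    mul_nonneg (hL s' o) (predBelief_nonneg T hT p hp a s')

/-- Structural identity: `IG = (linear part) - ∑ φ(obsPred)` with `φ x = x log x`. -/
lemma IG_eq (T : S → A → S → ℝ) (L : S → O → ℝ)
    (hT : ∀ s a s', 0 ≤ T s a s') (hL : ∀ s o, 0 ≤ L s o)
    (p : S → ℝ) (hp : ∀ s, 0 ≤ p s) (a : A) :
    IG T L p a =
      (∑ o', ∑ s', L s' o' * predBelief T p a s' * Real.log (L s' o'))
      - ∑ o', obsPred T L p a o' * Real.log (obsPred T L p a o') := by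
  unfold IG
  rw [← Finset.sum_sub_distrib]
  refine Finset.sum_congr rfl fun o' _ => ?_
  have hq0 : ∀ s', 0 ≤ predBelief T p a s' := predBelief_nonneg T hT p hp a
  by_cases hP : 0 < obsPred T L p a o'
  · simp only [hP, if_true]
    have hPne : obsPred T L p a o' ≠ 0 := ne_of_gt hP
    have key : ∀ s',
        obsPred T L p a o' *
          (if 0 < postBelief T L p a o' s' then
            postBelief T L p a o' s' *
              Real.log (postBelief T L p a o' s' / predBelief T p a s') else 0)
        = L s' o' * predBelief T p a s' * Real.log (L s' o')
          - L s' o' * predBelief T p a s' * Real.log (obsPred T L p a o') := by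
      intro s'
      have hpost : postBelief T L p a o' s'
          = L s' o' * predBelief T p a s' / obsPred T L p a o' := rfl
      by_cases hps : 0 < postBelief T L p a o' s'
      · have hLq : 0 < L s' o' * predBelief T p a s' := by
          have := hps
          rw [hpost] at this
          have := mul_pos this hP
          rwa [div_mul_cancel₀ _ hPne] at this
        have hLpos : 0 < L s' o' := by
          rcases (hL s' o').eq_or_lt with h | h
          · exfalso; rw [← h, zero_mul] at hLq; exact lt_irrefl 0 hLq
          · exact h
        have hqpos : 0 < predBelief T p a s' := by
          rcases (hq0 s').eq_or_lt with h | h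
          · exfalso; rw [← h, mul_zero] at hLq; exact lt_irrefl 0 hLq
          · exact h
        have hdiv : postBelief T L p a o' s' / predBelief T p a s'
            = L s' o' / obsPred T L p a o' := by
          rw [hpost]; field_simp
        simp only [hps, if_true]
        rw [hdiv, Real.log_div (ne_of_gt hLpos) hPne, hpost]
        field_simp
      · have hpz : postBelief T L p a o' s' = 0 := by
          have hge : 0 ≤ postBelief T L p a o' s' := by
            rw [hpost]; exact div_nonneg (mul_nonneg (hL s' o') (hq0 s')) (le_of_lt hP)
          exact le_antisymm (not_lt.1 hps) hge
        have hLq : L s' o' * predBelief T p a s' = 0 := by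
          rw [hpost] at hpz
          exact (div_eq_zero_iff.1 hpz).resolve_right hPne
        simp [hps, hLq]
    unfold KL
    rw [Finset.mul_sum]
    rw [Finset.sum_congr rfl fun s' _ => key s', Finset.sum_sub_distrib]
    congr 1
    rw [← Finset.sum_mul]
    rfl
  · have hPz : obsPred T L p a o' = 0 :=
      le_antisymm (not_lt.1 hP) (obsPred_nonneg T L hT hL p hp a o')
    have hterm : ∀ s' ∈ Finset.univ (α := S), L s' o' * predBelief T p a s' = 0 := by
      apply (Finset.sum_eq_zero_iff_of_nonneg
        (fun s' _ => mul_nonneg (hL s' o') (hq0 s'))).1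
      exact hPz
    simp only [hP, if_false, hPz, zero_mul, zero_sub]
    rw [Finset.sum_congr rfl fun s' hs' => by rw [hterm s' hs', zero_mul]]
    simp

end Aux

/-- Information gain decreases in expectation after Bayesian conditioning
(intermediate claim in the proof of the EFE EVPO bound). -/
theorem expected_posterior_ig_le_prior_ig
    {S O A : Type*} [Fintype S] [Fintype O]
    (T : S → A → S → ℝ) (hT : ∀ s a, IsBelief (T s a))
    (L : S → O → ℝ) (hL : ∀ s, IsBelief (L s))
    (b : S → ℝ) (hb : IsBelief b) (a : A) :
    (∑ o, if 0 < (∑ s, L s o * b s) then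
        (∑ s, L s o * b s) *
          IG T L (fun s => L s o * b s / (∑ s', L s' o * b s')) a
      else 0)
    ≤ IG T L b a := by
  obtain ⟨hb0, hb1⟩ := hb
  have hT0 : ∀ s a s', 0 ≤ T s a s' := fun s a => (hT s a).1
  have hL0 : ∀ s o, 0 ≤ L s o := fun s => (hL s).1
  have hL1 : ∀ s, ∑ o, L s o = 1 := fun s => (hL s).2
  -- abbreviations
  set w : O → ℝ := fun o => ∑ s, L s o * b s with hw
  set c : O → S → ℝ := fun o s => L s o * b s / (∑ s', L s' o * b s') with hc
  set Q : O → S → ℝ := fun o s' => ∑ s, T s a s' * (L s o * b s) with hQ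
  set t : Finset O := Finset.univ.filter (fun o => 0 < w o) with ht
  have hw0 : ∀ o, 0 ≤ w o := fun o =>
    Finset.sum_nonneg fun s _ => mul_nonneg (hL0 s o) (hb0 s)
  have hwsum : ∑ o, w o = 1 := by
    rw [hw]
    rw [Finset.sum_comm]
    calc ∑ s, ∑ o, L s o * b s = ∑ s, b s := by
          refine Finset.sum_congr rfl fun s _ => ?_
          rw [← Finset.sum_mul, hL1 s, one_mul]
      _ = 1 := hb1
  have hwzero : ∀ o, ¬ 0 < w o → ∀ s, L s o * b s = 0 := by
    intro o h s
    have hz : w o = 0 := le_antisymm (not_lt.1 h) (hw0 o)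
    exact (Finset.sum_eq_zero_iff_of_nonneg
      (fun s _ => mul_nonneg (hL0 s o) (hb0 s))).1 hz s (Finset.mem_univ s)
  have hc0 : ∀ o s, 0 ≤ c o s := fun o s =>
    div_nonneg (mul_nonneg (hL0 s o) (hb0 s)) (hw0 o)
  have hQ0 : ∀ o, ¬ 0 < w o → ∀ s', Q o s' = 0 := by
    intro o h s'
    rw [hQ]
    exact Finset.sum_eq_zero fun s _ => by rw [hwzero o h s, mul_zero]
  -- key identities for o with w o ≠ 0
  have hpred : ∀ o, w o ≠ 0 → ∀ s', w o * predBelief T (c o) a s' = Q o s' := by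
    intro o hne s'
    rw [predBelief, Finset.mul_sum, hQ]
    refine Finset.sum_congr rfl fun s _ => ?_
    rw [hc]
    change w o * (T s a s' * (L s o * b s / w o)) = T s a s' * (L s o * b s)
    field_simp
  have hobs : ∀ o, w o ≠ 0 → ∀ o',
      w o * obsPred T L (c o) a o' = ∑ s', L s' o' * Q o s' := by
    intro o hne o'
    rw [obsPred, Finset.mul_sum]
    refine Finset.sum_congr rfl fun s' _ => ?_
    rw [← hpred o hne s']
    ring
  have hQsum : ∀ s', ∑ o, Q o s' = predBelief T b a s' := by
    intro s'
    rw [hQ, Finset.sum_comm, predBelief]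
    refine Finset.sum_congr rfl fun s _ => ?_
    calc ∑ o, T s a s' * (L s o * b s) = T s a s' * b s * ∑ o, L s o := by
          rw [Finset.mul_sum]; exact Finset.sum_congr rfl fun o _ => by ring
      _ = T s a s' * b s := by rw [hL1 s, mul_one]
  have htsub : ∀ o ∈ Finset.univ (α := O), o ∉ t → w o = 0 := by
    intro o _ h
    rw [ht] at h
    simp only [Finset.mem_filter, Finset.mem_univ, true_and] at h
    exact le_antisymm (not_lt.1 h) (hw0 o)
  have htsum : ∑ o ∈ t, w o = 1 := by
    rw [← hwsum]
    exact Finset.sum_subset (Finset.filter_subset _ _) (fun o h1 h2 => htsub o h1 h2)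
  have htmem : ∀ o ∈ t, 0 < w o := by
    intro o h; rw [ht] at h
    exact (Finset.mem_filter.1 h).2
  -- rewrite LHS over the filter
  have hLHS : (∑ o, if 0 < w o then w o * IG T L (c o) a else 0)
      = ∑ o ∈ t, w o * IG T L (c o) a := by
    rw [ht, Finset.sum_filter]
  rw [show (∑ o, if 0 < (∑ s, L s o * b s) then
        (∑ s, L s o * b s) *
          IG T L (fun s => L s o * b s / (∑ s', L s' o * b s')) a
      else 0) = ∑ o, if 0 < w o then w o * IG T L (c o) a else 0 from rfl, hLHS]
  -- expand IG via IG_eq on both sides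
  rw [IG_eq T L hT0 hL0 b hb0 a]
  have hIGc : ∀ o ∈ t, w o * IG T L (c o) a
      = (∑ o', ∑ s', L s' o' * Q o s' * Real.log (L s' o'))
        - ∑ o', w o * (obsPred T L (c o) a o' * Real.log (obsPred T L (c o) a o')) := by
    intro o hot
    have hne : w o ≠ 0 := ne_of_gt (htmem o hot)
    rw [IG_eq T L hT0 hL0 (c o) (hc0 o) a, mul_sub]
    congr 1
    · rw [Finset.mul_sum]
      refine Finset.sum_congr rfl fun o' _ => ?_
      rw [Finset.mul_sum]
      refine Finset.sum_congr rfl fun s' _ => ?_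
      rw [← hpred o hne s']
      ring
    · rw [Finset.mul_sum]
  rw [Finset.sum_congr rfl hIGc, Finset.sum_sub_distrib]
  -- linear parts are equal
  have hlin : ∑ o ∈ t, ∑ o', ∑ s', L s' o' * Q o s' * Real.log (L s' o')
      = ∑ o', ∑ s', L s' o' * predBelief T b a s' * Real.log (L s' o') := by
    rw [Finset.sum_comm]
    refine Finset.sum_congr rfl fun o' _ => ?_
    rw [Finset.sum_comm]
    refine Finset.sum_congr rfl fun s' _ => ?_
    have : ∑ o ∈ t, L s' o' * Q o s' * Real.log (L s' o')
        = ∑ o, L s' o' * Q o s' * Real.log (L s' o') := by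
      refine Finset.sum_subset (Finset.filter_subset _ _) ?_
      intro o h1 h2
      have : Q o s' = 0 := by
        refine hQ0 o ?_ s'
        intro hlt
        exact h2 (by rw [ht]; exact Finset.mem_filter.2 ⟨Finset.mem_univ o, hlt⟩)
      rw [this, mul_zero, zero_mul]
    rw [this, ← Finset.sum_mul, ← Finset.mul_sum, hQsum s']
  rw [hlin]
  -- reduce to Jensen on the entropy parts
  apply sub_le_sub_left
  rw [Finset.sum_comm]
  refine Finset.sum_le_sum fun o' _ => ?_
  -- Jensen for x ↦ x log x
  have hconv := Real.convexOn_mul_log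
  have hjensen := hconv.map_sum_le (t := t) (w := w)
    (p := fun o => obsPred T L (c o) a o')
    (fun o _ => hw0 o) htsum
    (fun o _ => Set.mem_Ici.2 (obsPred_nonneg T L hT0 hL0 (c o) (hc0 o) a o'))
  have hmix : ∑ o ∈ t, w o • obsPred T L (c o) a o' = obsPred T L b a o' := by
    have h1 : ∀ o ∈ t, w o • obsPred T L (c o) a o' = ∑ s', L s' o' * Q o s' := by
      intro o hot
      rw [smul_eq_mul]
      exact hobs o (ne_of_gt (htmem o hot)) o'
    rw [Finset.sum_congr rfl h1]
    have h2 : ∑ o ∈ t, ∑ s', L s' o' * Q o s' = ∑ o, ∑ s', L s' o' * Q o s' := by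
      refine Finset.sum_subset (Finset.filter_subset _ _) ?_
      intro o h1' h2'
      refine Finset.sum_eq_zero fun s' _ => ?_
      have hqz : Q o s' = 0 := by
        refine hQ0 o ?_ s'
        intro hlt
        exact h2' (by rw [ht]; exact Finset.mem_filter.2 ⟨Finset.mem_univ o, hlt⟩)
      rw [hqz, mul_zero]
    rw [h2, Finset.sum_comm, obsPred]
    refine Finset.sum_congr rfl fun s' _ => ?_
    rw [← Finset.mul_sum, hQsum s']
  rw [hmix] at hjensen
  simpa only [smul_eq_mul] using hjensen
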